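/- Let (Ω, F, P) be a probability space and (ℱ_n)_{n≥1} an increasing sequence of sub-σ-algebras of F. For each n let X_n : Ω → ℝ be ℱ_n-measurable, T_n : Ω → ℝ be ℱ_n-measurable, and W_n : Ω → ℝ be ℱ_{n+1}-measurable with X_{n+1} = T_n + W_n, E[W_n | ℱ_n] = 0 almost surely, and Σ_{n=1}^∞ E[W_n²] < ∞. Let α_n, β_n, γ_n : Ω → ℝ be nonnegative functions such that almost surely α_n → 0, almost surely Σ_n β_n < ∞, and almost surely Σ_n γ_n = ∞. Suppose there is x* ∈ ℝ such that for every n and almost every ω, |T_n(ω) − x*| ≤ max(α_n(ω), (1 + β_n(ω) − γ_n(ω))|X_n(ω) − x*|). Then X_n converges to x* almost surely. -/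

import Mathlib

open MeasureTheory Filter Topology
open scoped NNReal ENNReal

section Aux

lemma abs_add_le_max_dvor (a b : ℝ) :
    |a + b| ≤ max (|a| + (if 0 ≤ a then (1:ℝ) else -1) * b) |b| := by
  rcases le_or_gt 0 a with h | h
  · rw [if_pos h, one_mul, abs_of_nonneg h, le_max_iff]
    rcases abs_cases (a + b) with ⟨h1, _⟩ | ⟨h1, h2⟩
    · left; linarith
    · right; rw [h1]; rcases abs_cases b with ⟨h3, _⟩ | ⟨h3, _⟩ <;> linarith
  · rw [if_neg (not_le.mpr h), abs_of_neg h, le_max_iff]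
    rcases abs_cases (a + b) with ⟨h1, h2⟩ | ⟨h1, _⟩
    · right; rw [h1]; rcases abs_cases b with ⟨h3, _⟩ | ⟨h3, _⟩ <;> linarith
    · left; linarith

/-- Deterministic Derman–Sacks style lemma. -/
lemma dvoretzky_det
    (e α β γ w δ : ℕ → ℝ)
    (he : ∀ n, 0 ≤ e n)
    (hα0 : ∀ n, 0 ≤ α n) (hαt : Tendsto α atTop (𝓝 0))
    (hβ0 : ∀ n, 0 ≤ β n) (hβs : Summable β)
    (hγ0 : ∀ n, 0 ≤ γ n) (hγ1 : ∀ n, γ n ≤ 1)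
    (hγt : Tendsto (fun n => ∑ k ∈ Finset.range n, γ k) atTop atTop)
    (hw : CauchySeq (fun n => ∑ k ∈ Finset.range n, w k))
    (hδ0 : ∀ n, 0 ≤ δ n) (hδt : Tendsto δ atTop (𝓝 0))
    (hrec : ∀ n, e (n+1) ≤ max (max (α n) ((1 + β n - γ n) * e n) + w n) (δ n)) :
    Tendsto e atTop (𝓝 0) := by
  classical
  set S : ℕ → ℝ := fun n => ∑ k ∈ Finset.range n, w k with hSdef
  set E : ℝ := Real.exp 1 with hEdef
  have hE1 : 1 ≤ E := by
    have := Real.exp_one_gt_d9; rw [hEdef]; linarith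
  have hE3 : E ≤ 3 := by
    have := Real.exp_one_lt_d9; rw [hEdef]; linarith
  have hmain : ∀ ε : ℝ, 0 < ε → ∃ M, ∀ m, M ≤ m → e m ≤ 9 * ε := by
    intro ε hε
    obtain ⟨N₁, hN₁⟩ : ∃ N, ∀ n, N ≤ n → α n ≤ ε :=
      eventually_atTop.mp (hαt.eventually (eventually_le_nhds hε))
    obtain ⟨N₂, hN₂⟩ : ∃ N, ∀ n, N ≤ n → δ n ≤ ε :=
      eventually_atTop.mp (hδt.eventually (eventually_le_nhds hε))
    obtain ⟨N₃, hN₃⟩ : ∃ N, ∀ n m, N ≤ n → n ≤ m → ∑ k ∈ Finset.Ico n m, β k ≤ 1 := by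
      obtain ⟨N, hN⟩ := Metric.cauchySeq_iff.mp hβs.hasSum.tendsto_sum_nat.cauchySeq 1 one_pos
      refine ⟨N, fun n m hn hnm => ?_⟩
      have h := hN m (hn.trans hnm) n hn
      rw [Real.dist_eq] at h
      have heq : ∑ k ∈ Finset.Ico n m, β k
          = (∑ k ∈ Finset.range m, β k) - ∑ k ∈ Finset.range n, β k :=
        Finset.sum_Ico_eq_sub _ hnm
      rw [heq]
      calc (∑ k ∈ Finset.range m, β k) - ∑ k ∈ Finset.range n, β k
          ≤ |(∑ k ∈ Finset.range m, β k) - ∑ k ∈ Finset.range n, β k| := le_abs_self _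
        _ ≤ 1 := h.le
    obtain ⟨N₄, hN₄⟩ : ∃ N, ∀ n m, N ≤ n → n ≤ m → |S m - S n| ≤ ε := by
      obtain ⟨N, hN⟩ := Metric.cauchySeq_iff.mp hw ε hε
      exact ⟨N, fun n m hn hnm => by
        have h := hN m (hn.trans hnm) n hn
        rw [Real.dist_eq] at h
        exact h.le⟩
    set N := max (max N₁ N₂) (max N₃ N₄) with hNdef
    have hNN₁ : N₁ ≤ N := le_trans (le_max_left _ _) (le_max_left _ _)
    have hNN₂ : N₂ ≤ N := le_trans (le_max_right _ _) (le_max_left _ _)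
    have hNN₃ : N₃ ≤ N := le_trans (le_max_left _ _) (le_max_right _ _)
    have hNN₄ : N₄ ≤ N := le_trans (le_max_right _ _) (le_max_right _ _)
    have σfact : ∀ M n, N ≤ M → M ≤ n → |S n - S M| ≤ ε := fun M n hM hn =>
      hN₄ M n (hNN₄.trans hM) hn
    have keystep : ∀ n, N ≤ n → 2*ε < e (n+1) →
        e (n+1) ≤ (1 + β n - γ n) * e n + w n := by
      intro n hn h2
      have hwn : |w n| ≤ ε := by
        have h := σfact n (n+1) hn (Nat.le_succ n)
        have : S (n+1) = S n + w n := Finset.sum_range_succ _ _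
        rw [this] at h; simpa using h
      have hδn : δ n ≤ ε := hN₂ n (hNN₂.trans hn)
      have hαn : α n ≤ ε := hN₁ n (hNN₁.trans hn)
      have h := hrec n
      rcases max_cases (max (α n) ((1 + β n - γ n) * e n) + w n) (δ n) with ⟨heq, _⟩ | ⟨heq, _⟩ <;>
        rw [heq] at h
      · rcases max_cases (α n) ((1 + β n - γ n) * e n) with ⟨heq2, _⟩ | ⟨heq2, _⟩ <;>
          rw [heq2] at h
        · rcases abs_le.mp hwn with ⟨_, hw2⟩; linarith
        · exact h
      · linarith
    have zpos : ∀ M n, N ≤ M → M ≤ n → 0 ≤ e n - (S n - S M) + ε := by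
      intro M n hM hn
      rcases abs_le.mp (σfact M n hM hn) with ⟨_, h2⟩
      have := he n; linarith
    have zstep : ∀ M n, N ≤ M → M ≤ n → 2*ε < e (n+1) →
        e (n+1) - (S (n+1) - S M) + ε
          ≤ (1 + β n) * (e n - (S n - S M) + ε) - γ n * e n := by
      intro M n hM hn h2
      have hk := keystep n (hM.trans hn) h2
      rcases abs_le.mp (σfact M n hM hn) with ⟨hσ1, hσ2⟩
      have hSn1 : S (n+1) = S n + w n := Finset.sum_range_succ _ _
      have h1 : 0 ≤ β n * (ε - (S n - S M)) := mul_nonneg (hβ0 n) (by linarith)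
      rw [hSn1]
      nlinarith [h1, hk]
    have gron : ∀ M, N ≤ M → ∀ m, M ≤ m → (∀ k, M < k → k ≤ m → 2*ε < e k) →
        e m - (S m - S M) + ε ≤ (e M + ε) * Real.exp (∑ k ∈ Finset.Ico M m, β k) := by
      intro M hM
      refine Nat.le_induction ?_ ?_
      · intro _; simp
      · intro n hn ih hall
        have ih' := ih (fun k hk1 hk2 => hall k hk1 (hk2.trans (Nat.le_succ n)))
        have hz := zstep M n hM hn (hall (n+1) (Nat.lt_succ_of_le hn) le_rfl)
        have hzp := zpos M n hM hn
        have hexp : (1 : ℝ) + β n ≤ Real.exp (β n) := by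
          linarith [Real.add_one_le_exp (β n)]
        have h1 : e (n+1) - (S (n+1) - S M) + ε
            ≤ (1 + β n) * (e n - (S n - S M) + ε) := by
          nlinarith [mul_nonneg (hγ0 n) (he n)]
        have h2 : (1 + β n) * (e n - (S n - S M) + ε)
            ≤ Real.exp (β n) * ((e M + ε) * Real.exp (∑ k ∈ Finset.Ico M n, β k)) := by
          have hb : (1 + β n) * (e n - (S n - S M) + ε)
              ≤ Real.exp (β n) * (e n - (S n - S M) + ε) :=
            mul_le_mul_of_nonneg_right hexp hzp
          have hc : Real.exp (β n) * (e n - (S n - S M) + ε)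
              ≤ Real.exp (β n) * ((e M + ε) * Real.exp (∑ k ∈ Finset.Ico M n, β k)) :=
            mul_le_mul_of_nonneg_left ih' (Real.exp_pos _).le
          linarith
        rw [Finset.sum_Ico_succ_top hn, Real.exp_add]
        have h3 : (e M + ε) * (Real.exp (∑ k ∈ Finset.Ico M n, β k) * Real.exp (β n))
            = Real.exp (β n) * ((e M + ε) * Real.exp (∑ k ∈ Finset.Ico M n, β k)) := by ring
        rw [h3]; linarith
    have GclaimE : ∀ M, N ≤ M → ∀ m, M ≤ m → (∀ k, M < k → k ≤ m → 2*ε < e k) →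
        e m ≤ (e M + ε) * E := by
      intro M hM m hm hall
      have hg := gron M hM m hm hall
      rcases abs_le.mp (σfact M m hM hm) with ⟨hσ1, _⟩
      have hsum : ∑ k ∈ Finset.Ico M m, β k ≤ 1 := hN₃ M m (hNN₃.trans hM) hm
      have hexp : Real.exp (∑ k ∈ Finset.Ico M m, β k) ≤ E := by
        rw [hEdef]; exact Real.exp_le_exp.mpr hsum
      have h0 : 0 ≤ e M + ε := by have := he M; linarith
      have := mul_le_mul_of_nonneg_left hexp h0
      linarith
    have step1 : ∃ M, N ≤ M ∧ e M ≤ 2*ε := by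
      by_contra hcon
      push_neg at hcon
      set Z : ℝ := (e N + ε) * E with hZ
      have hZ0 : 0 ≤ Z := mul_nonneg (by have := he N; linarith) (by linarith)
      have hzbd : ∀ n, N ≤ n → e n - (S n - S N) + ε ≤ Z := by
        intro n hn
        have := GclaimE N le_rfl n hn (fun k hk _ => hcon k hk.le)
        rcases abs_le.mp (σfact N n le_rfl hn) with ⟨hσ1, _⟩
        -- need z ≤ (e N + ε) * E : use gron bound directly
        have hg := gron N le_rfl n hn (fun k hk _ => hcon k hk.le)
        have hsum : ∑ k ∈ Finset.Ico N n, β k ≤ 1 := hN₃ N n hNN₃ hn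
        have hexp : Real.exp (∑ k ∈ Finset.Ico N n, β k) ≤ E := by
          rw [hEdef]; exact Real.exp_le_exp.mpr hsum
        have h0 : 0 ≤ e N + ε := by have := he N; linarith
        have := mul_le_mul_of_nonneg_left hexp h0
        linarith
      have htel : ∀ n, N ≤ n → e n - (S n - S N) + ε
          ≤ (e N + ε) + Z * (∑ k ∈ Finset.Ico N n, β k)
            - (2*ε) * (∑ k ∈ Finset.Ico N n, γ k) := by
        refine Nat.le_induction ?_ ?_
        · simp [Finset.Ico_self]
        · intro n hn ih
          have hz := zstep N n le_rfl hn (hcon (n+1) (by omega))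
          have hzbdn := hzbd n hn
          have hge : 2*ε ≤ e n := (hcon n hn).le
          rw [Finset.sum_Ico_succ_top hn, Finset.sum_Ico_succ_top hn]
          have hb := mul_le_mul_of_nonneg_left hzbdn (hβ0 n)
          have hgg := mul_le_mul_of_nonneg_left hge (hγ0 n)
          nlinarith
      have hγ' : Tendsto (fun n => ∑ k ∈ Finset.Ico N n, γ k) atTop atTop := by
        have hsub : Tendsto
            (fun n => (∑ k ∈ Finset.range n, γ k) + -(∑ k ∈ Finset.range N, γ k))
            atTop atTop := tendsto_atTop_add_const_right _ _ hγt
        apply Tendsto.congr' _ hsub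
        filter_upwards [eventually_ge_atTop N] with n hn
        have := Finset.sum_Ico_eq_sub γ hn
        linarith
      obtain ⟨n, hn1, hn2⟩ :
          ∃ n, N ≤ n ∧ ((e N + ε) + Z + 1) / (2*ε) ≤ ∑ k ∈ Finset.Ico N n, γ k := by
        have := (hγ'.eventually_ge_atTop (((e N + ε) + Z + 1) / (2*ε))).and
          (eventually_ge_atTop N)
        obtain ⟨n, h1, h2⟩ := this.exists
        exact ⟨n, h2, h1⟩
      have h1 := htel n hn1
      have h2 := zpos N n le_rfl hn1
      have hβbd : ∑ k ∈ Finset.Ico N n, β k ≤ 1 := hN₃ N n hNN₃ hn1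
      have hZb := mul_le_mul_of_nonneg_left hβbd hZ0
      have h2ε : (0:ℝ) < 2*ε := by linarith
      have hK : (e N + ε) + Z + 1 ≤ (∑ k ∈ Finset.Ico N n, γ k) * (2*ε) :=
        (div_le_iff₀ h2ε).mp hn2
      nlinarith
    obtain ⟨M, hMN, hM2⟩ := step1
    refine ⟨M, fun m hm => ?_⟩
    rcases le_or_gt (e m) (2*ε) with h | h
    · linarith
    · have hMm : M < m := by
        rcases Nat.eq_or_lt_of_le hm with rfl | h'
        · exact absurd hM2 (not_le.mpr h)
        · exact h'
      set P : ℕ → Prop := fun k => M ≤ k ∧ e k ≤ 2*ε with hPdef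
      have hPM : P M := ⟨le_rfl, hM2⟩
      have hMb : M ≤ m - 1 := by omega
      set M' := Nat.findGreatest P (m-1) with hM'def
      have hPM' : P M' := Nat.findGreatest_spec hMb hPM
      have hM'M : M ≤ M' := Nat.le_findGreatest hMb hPM
      have hM'm : M' < m := lt_of_le_of_lt (Nat.findGreatest_le _) (by omega)
      have hall : ∀ k, M' < k → k ≤ m → 2*ε < e k := by
        intro k hk1 hk2
        rcases Nat.eq_or_lt_of_le hk2 with rfl | hk3
        · exact h
        · have hkb : k ≤ m - 1 := by omega
          have hnp := Nat.findGreatest_is_greatest hk1 hkb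
          have hMk : M ≤ k := le_trans hM'M hk1.le
          by_contra hcon2; push_neg at hcon2
          exact hnp ⟨hMk, hcon2⟩
      have hGm := GclaimE M' (hMN.trans hM'M) m hM'm.le hall
      have hb : (e M' + ε) * E ≤ 9 * ε := by nlinarith [hPM'.2, (he M')]
      linarith
  rw [Metric.tendsto_atTop]
  intro ε₀ hε₀
  obtain ⟨M, hM⟩ := hmain (ε₀ / 10) (by linarith)
  exact ⟨M, fun n hn => by
    rw [Real.dist_eq, sub_zero, abs_of_nonneg (he n)]
    have := hM n hn; linarith⟩

end Aux

/-- Corollary of the extended Dvoretzky theorem with the multiplicative bound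
`max (α n) ((1 + β n - γ n) * |X n - x*|)` on the operator `T n`. -/
theorem dvoretzky_extended_mult_bound
    {Ω : Type*} {mΩ : MeasurableSpace Ω} (μ : Measure Ω) [IsProbabilityMeasure μ]
    (ℱ : Filtration ℕ mΩ)
    (X : ℕ → Ω → ℝ) (hX : Adapted ℱ X)
    (T : ℕ → Ω → ℝ) (hT : ∀ n, Measurable[ℱ n] (T n))
    (W : ℕ → Ω → ℝ) (hW : ∀ n, Measurable[ℱ (n + 1)] (W n))
    (hrec : ∀ n ω, X (n + 1) ω = T n ω + W n ω)
    (hcond : ∀ n, μ[W n | ℱ n] =ᵐ[μ] 0)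
    (hvar : ∑' n, ∫⁻ ω, ENNReal.ofReal ((W n ω) ^ 2) ∂μ < ⊤)
    (α β γ : ℕ → Ω → ℝ)
    (hα0 : ∀ n ω, 0 ≤ α n ω) (hβ0 : ∀ n ω, 0 ≤ β n ω) (hγ0 : ∀ n ω, 0 ≤ γ n ω)
    (hα : ∀ᵐ ω ∂μ, Tendsto (fun n => α n ω) atTop (𝓝 0))
    (hβ : ∀ᵐ ω ∂μ, Summable (fun n => β n ω))
    (hγ : ∀ᵐ ω ∂μ, Tendsto (fun n => ∑ k ∈ Finset.range n, γ k ω) atTop atTop)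
    (xstar : ℝ)
    (hbound : ∀ n, ∀ᵐ ω ∂μ,
      |T n ω - xstar| ≤ max (α n ω) ((1 + β n ω - γ n ω) * |X n ω - xstar|)) :
    ∀ᵐ ω ∂μ, Tendsto (fun n => X n ω) atTop (𝓝 xstar) := by
  classical
  -- basic measurability
  have hWmeas : ∀ n, Measurable (W n) := fun n => (hW n).mono (ℱ.le (n+1)) le_rfl
  -- the signs
  set s : ℕ → Ω → ℝ := fun n ω => if 0 ≤ T n ω - xstar then 1 else -1 with hsdef
  have hs_meas : ∀ n, Measurable[ℱ n] (s n) := by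
    intro n
    exact Measurable.ite (measurableSet_le measurable_const ((hT n).sub measurable_const))
      measurable_const measurable_const
  have hs_bdd : ∀ n ω, |s n ω| = 1 := by
    intro n ω
    by_cases h : 0 ≤ T n ω - xstar
    · simp only [hsdef]; rw [if_pos h]; norm_num
    · simp only [hsdef]; rw [if_neg h]; norm_num
  have hs_sq : ∀ n ω, s n ω ^ 2 = 1 := by
    intro n ω
    by_cases h : 0 ≤ T n ω - xstar
    · simp only [hsdef]; rw [if_pos h]; norm_num
    · simp only [hsdef]; rw [if_neg h]; norm_num
  -- L² facts about W
  have hW2int : ∀ n, Integrable (fun ω => (W n ω)^2) μ := by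
    intro n
    have hfin : ∫⁻ ω, ENNReal.ofReal ((W n ω)^2) ∂μ < ⊤ :=
      lt_of_le_of_lt (ENNReal.le_tsum n) hvar
    refine ⟨((hWmeas n).pow_const 2).aestronglyMeasurable, ?_⟩
    rw [hasFiniteIntegral_iff_ofReal (Eventually.of_forall fun ω => sq_nonneg _)]
    exact hfin
  have hWL2 : ∀ n, MemLp (W n) 2 μ :=
    fun n => (memLp_two_iff_integrable_sq (hWmeas n).aestronglyMeasurable).mpr (hW2int n)
  have hWint : ∀ n, Integrable (W n) μ := fun n => (hWL2 n).integrable one_le_two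
  -- modified noise
  set w' : ℕ → Ω → ℝ := fun n => s n * W n with hw'def
  have hw'app : ∀ n ω, w' n ω = s n ω * W n ω := fun n ω => rfl
  have hw'meas : ∀ n, Measurable[ℱ (n+1)] (w' n) :=
    fun n => (((hs_meas n).mono (ℱ.mono (Nat.le_succ n)) le_rfl)).mul (hW n)
  have hw'measΩ : ∀ n, Measurable (w' n) := fun n => (hw'meas n).mono (ℱ.le (n+1)) le_rfl
  have hw'2eq : ∀ n ω, (w' n ω)^2 = (W n ω)^2 := by
    intro n ω
    rw [hw'app, mul_pow, hs_sq, one_mul]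
  have hw'L2 : ∀ n, MemLp (w' n) 2 μ := by
    intro n
    refine (memLp_two_iff_integrable_sq (hw'measΩ n).aestronglyMeasurable).mpr ?_
    exact (hW2int n).congr (Eventually.of_forall fun ω => (hw'2eq n ω).symm)
  have hw'int : ∀ n, Integrable (w' n) μ := fun n => (hw'L2 n).integrable one_le_two
  -- conditional expectation of w' vanishes
  have hcond' : ∀ n, μ[w' n | ℱ n] =ᵐ[μ] 0 := by
    intro n
    have hpull : μ[s n * W n | ℱ n] =ᵐ[μ] s n * μ[W n | ℱ n] :=
      condExp_stronglyMeasurable_mul_of_bound (ℱ.le n) (hs_meas n).stronglyMeasurable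
        (hWint n) 1 (Eventually.of_forall fun ω => by
          rw [Real.norm_eq_abs, hs_bdd n ω])
    refine hpull.trans ?_
    filter_upwards [hcond n] with ω hω
    simp only [Pi.mul_apply, Pi.zero_apply] at *
    rw [hω, mul_zero]
  -- partial sums
  set Sm : ℕ → Ω → ℝ := fun n ω => ∑ k ∈ Finset.range n, w' k ω with hSmdef
  have hSmadd : ∀ n, Sm (n+1) = Sm n + w' n := by
    intro n; funext ω; simp [hSmdef, Finset.sum_range_succ]
  have hSmmeas : ∀ n, Measurable[ℱ n] (Sm n) := by
    intro n
    refine Finset.measurable_sum _ fun k hk => ?_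
    exact (hw'meas k).mono (ℱ.mono (Finset.mem_range.mp hk)) le_rfl
  have hSmint : ∀ n, Integrable (Sm n) μ :=
    fun n => integrable_finset_sum _ fun k _ => hw'int k
  have hSmL2 : ∀ n, MemLp (Sm n) 2 μ :=
    fun n => memLp_finset_sum _ fun k _ => hw'L2 k
  -- martingale
  have hmart : Martingale Sm ℱ μ := by
    refine martingale_nat (fun n => (hSmmeas n).stronglyMeasurable) hSmint fun n => ?_
    have h1 : μ[Sm (n+1)|ℱ n] =ᵐ[μ] μ[Sm n|ℱ n] + μ[w' n|ℱ n] := by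
      rw [hSmadd n]
      exact condExp_add (hSmint n) (hw'int n) _
    have h2 : μ[Sm n|ℱ n] = Sm n :=
      condExp_of_stronglyMeasurable (ℱ.le n) (hSmmeas n).stronglyMeasurable (hSmint n)
    filter_upwards [h1, hcond' n] with ω hω1 hω2
    rw [hω1, Pi.add_apply, h2, hω2, Pi.zero_apply, add_zero]
  -- cross terms
  have hgsm : ∀ n, StronglyMeasurable[ℱ n] (Sm n * s n) :=
    fun n => ((hSmmeas n).mul (hs_meas n)).stronglyMeasurable
  have hgL2 : ∀ n, MemLp (Sm n * s n) 2 μ := by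
    intro n
    refine (hSmL2 n).of_le
      (((hSmmeas n).mul (hs_meas n)).mono (ℱ.le n) le_rfl).aestronglyMeasurable
      (Eventually.of_forall fun ω => ?_)
    rw [Pi.mul_apply, norm_mul, Real.norm_eq_abs (s n ω), hs_bdd n ω, mul_one]
  have hcross_int : ∀ n, Integrable ((Sm n * s n) * W n) μ := by
    intro n
    have h1 : MemLp ((Sm n * s n) • W n) 1 μ :=
      MemLp.smul (r := 1) (hWL2 n) (hgL2 n)
    have heq : (Sm n * s n) • W n = (Sm n * s n) * W n := by
      funext ω; simp [Pi.smul_apply', smul_eq_mul]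
    rw [← heq]
    exact memLp_one_iff_integrable.mp h1
  have hcross_zero : ∀ n, ∫ ω, ((Sm n * s n) * W n) ω ∂μ = 0 := by
    intro n
    have hp := condExp_mul_of_stronglyMeasurable_left (hgsm n) (hcross_int n) (hWint n)
    have hz : μ[(Sm n * s n) * W n|ℱ n] =ᵐ[μ] 0 := by
      refine hp.trans ?_
      filter_upwards [hcond n] with ω hω
      simp only [Pi.mul_apply, Pi.zero_apply] at *
      rw [hω, mul_zero]
    calc ∫ ω, ((Sm n * s n) * W n) ω ∂μ
        = ∫ ω, (μ[(Sm n * s n) * W n|ℱ n]) ω ∂μ := (integral_condExp (ℱ.le n)).symm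
      _ = ∫ ω, (0 : Ω → ℝ) ω ∂μ := integral_congr_ae hz
      _ = 0 := by simp
  -- L² bound by induction
  have hL2bd : ∀ n, ∫ ω, (Sm n ω)^2 ∂μ ≤ ∑ k ∈ Finset.range n, ∫ ω, (W k ω)^2 ∂μ := by
    intro n; induction n with
    | zero => simp [hSmdef]
    | succ n ih =>
      have hsq : ∀ ω, (Sm (n+1) ω)^2
          = (Sm n ω)^2 + 2 * (((Sm n * s n) * W n) ω) + (w' n ω)^2 := by
        intro ω
        have h1 : Sm (n+1) ω = Sm n ω + w' n ω := by
          rw [hSmadd n]; rfl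
        rw [h1]
        simp only [Pi.mul_apply, hw'app]
        ring
      have hint1 : Integrable (fun ω => (Sm n ω)^2) μ := (hSmL2 n).integrable_sq
      have hint3 : Integrable (fun ω => (w' n ω)^2) μ := (hw'L2 n).integrable_sq
      have hint2 : Integrable (fun ω => 2 * (((Sm n * s n) * W n) ω)) μ :=
        (hcross_int n).const_mul 2
      have hw'sq : ∫ ω, (w' n ω)^2 ∂μ = ∫ ω, (W n ω)^2 ∂μ :=
        integral_congr_ae (Eventually.of_forall fun ω => hw'2eq n ω)
      calc ∫ ω, (Sm (n+1) ω)^2 ∂μ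
          = ∫ ω, ((Sm n ω)^2 + 2 * (((Sm n * s n) * W n) ω) + (w' n ω)^2) ∂μ :=
            integral_congr_ae (Eventually.of_forall hsq)
        _ = (∫ ω, ((Sm n ω)^2 + 2 * (((Sm n * s n) * W n) ω)) ∂μ)
              + ∫ ω, (w' n ω)^2 ∂μ := integral_add (hint1.add hint2) hint3
        _ = (∫ ω, (Sm n ω)^2 ∂μ) + (∫ ω, 2 * (((Sm n * s n) * W n) ω) ∂μ)
              + ∫ ω, (w' n ω)^2 ∂μ := by rw [integral_add hint1 hint2]
        _ = (∫ ω, (Sm n ω)^2 ∂μ) + 2 * (∫ ω, ((Sm n * s n) * W n) ω ∂μ)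
              + ∫ ω, (W n ω)^2 ∂μ := by rw [integral_const_mul, hw'sq]
        _ = (∫ ω, (Sm n ω)^2 ∂μ) + ∫ ω, (W n ω)^2 ∂μ := by rw [hcross_zero n]; ring
        _ ≤ (∑ k ∈ Finset.range n, ∫ ω, (W k ω)^2 ∂μ) + ∫ ω, (W n ω)^2 ∂μ := by linarith
        _ = ∑ k ∈ Finset.range (n+1), ∫ ω, (W k ω)^2 ∂μ := (Finset.sum_range_succ _ _).symm
  -- total variance
  set V : ℝ := (∑' n, ∫⁻ ω, ENNReal.ofReal ((W n ω)^2) ∂μ).toReal with hVdef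
  have hVnn : 0 ≤ V := ENNReal.toReal_nonneg
  have hterm : ∀ k, ∫ ω, (W k ω)^2 ∂μ = (∫⁻ ω, ENNReal.ofReal ((W k ω)^2) ∂μ).toReal := by
    intro k
    rw [integral_eq_lintegral_of_nonneg_ae (Eventually.of_forall fun ω => sq_nonneg _)
      ((hWmeas k).pow_const 2).aestronglyMeasurable]
  have hsumV : ∀ n, ∑ k ∈ Finset.range n, ∫ ω, (W k ω)^2 ∂μ ≤ V := by
    intro n
    rw [Finset.sum_congr rfl fun k _ => hterm k,
      ← ENNReal.toReal_sum (fun k _ => (lt_of_le_of_lt (ENNReal.le_tsum k) hvar).ne)]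
    exact ENNReal.toReal_mono hvar.ne (ENNReal.sum_le_tsum _)
  -- L¹ bound
  have hintabs : ∀ n, ∫ ω, |Sm n ω| ∂μ ≤ (1 + V)/2 := by
    intro n
    have hint1 : Integrable (fun ω => (Sm n ω)^2) μ := (hSmL2 n).integrable_sq
    have h1 : ∫ ω, |Sm n ω| ∂μ ≤ ∫ ω, (1 + (Sm n ω)^2)/2 ∂μ := by
      refine integral_mono (hSmint n).abs
        (((integrable_const (1:ℝ)).add hint1).div_const 2) fun ω => ?_
      nlinarith [sq_nonneg (|Sm n ω| - 1), sq_abs (Sm n ω)]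
    have h2 : ∫ ω, (1 + (Sm n ω)^2)/2 ∂μ = (1 + ∫ ω, (Sm n ω)^2 ∂μ)/2 := by
      rw [integral_div, integral_add (integrable_const (1:ℝ)) hint1, integral_const]
      simp [measure_univ]
    have h3 : ∫ ω, (Sm n ω)^2 ∂μ ≤ V := le_trans (hL2bd n) (hsumV n)
    linarith
  set R : ℝ≥0 := ((1 + V)/2).toNNReal with hRdef
  have hbdd : ∀ n, eLpNorm (Sm n) 1 μ ≤ (R : ℝ≥0∞) := by
    intro n
    rw [eLpNorm_one_eq_lintegral_enorm, ← ofReal_integral_norm_eq_lintegral_enorm (hSmint n)]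
    have h1 : ∫ ω, ‖Sm n ω‖ ∂μ ≤ (1 + V)/2 := by
      simpa [Real.norm_eq_abs] using hintabs n
    exact le_trans (ENNReal.ofReal_le_ofReal h1) (le_of_eq rfl)
  have hconv : ∀ᵐ ω ∂μ, ∃ c, Tendsto (fun n => Sm n ω) atTop (𝓝 c) :=
    hmart.submartingale.exists_ae_tendsto_of_bdd hbdd
  -- a.s. W → 0
  have hδae : ∀ᵐ ω ∂μ, Tendsto (fun n => |W n ω|) atTop (𝓝 0) := by
    have hm : ∀ n, Measurable fun ω => ENNReal.ofReal ((W n ω)^2) :=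
      fun n => ((hWmeas n).pow_const 2).ennreal_ofReal
    have h1 : ∫⁻ ω, ∑' n, ENNReal.ofReal ((W n ω)^2) ∂μ < ⊤ := by
      rw [lintegral_tsum fun n => (hm n).aemeasurable]
      exact hvar
    have h2 : ∀ᵐ ω ∂μ, ∑' n, ENNReal.ofReal ((W n ω)^2) < ⊤ :=
      ae_lt_top (Measurable.ennreal_tsum hm) h1.ne
    filter_upwards [h2] with ω hω
    have hsummable : Summable fun n => (W n ω)^2 := by
      have := ENNReal.summable_toReal hω.ne
      exact this.congr fun n => ENNReal.toReal_ofReal (sq_nonneg _)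
    have h3 : Tendsto (fun n => (W n ω)^2) atTop (𝓝 0) := hsummable.tendsto_atTop_zero
    have h4 := (Real.continuous_sqrt.tendsto 0).comp h3
    rw [Real.sqrt_zero] at h4
    refine h4.congr fun n => ?_
    simp [Function.comp, Real.sqrt_sq_eq_abs]
  -- pathwise conclusion
  have hboundall : ∀ᵐ ω ∂μ, ∀ n,
      |T n ω - xstar| ≤ max (α n ω) ((1 + β n ω - γ n ω) * |X n ω - xstar|) :=
    ae_all_iff.mpr hbound
  filter_upwards [hα, hβ, hγ, hδae, hconv, hboundall] with ω hαω hβω hγω hδω hcω hbω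
  obtain ⟨c, hc⟩ := hcω
  have hwC : CauchySeq fun n => ∑ k ∈ Finset.range n, s k ω * W k ω := by
    have : (fun n => ∑ k ∈ Finset.range n, s k ω * W k ω) = fun n => Sm n ω := by
      funext n; simp [hSmdef, hw'app]
    rw [this]
    exact hc.cauchySeq
  -- capped γ
  have hγ't : Tendsto (fun n => ∑ k ∈ Finset.range n, min (γ k ω) 1) atTop atTop := by
    rw [← not_summable_iff_tendsto_nat_atTop_of_nonneg
      fun n => le_min (hγ0 n ω) zero_le_one]
    intro hsum
    have hten : Tendsto (fun n => min (γ n ω) 1) atTop (𝓝 0) := hsum.tendsto_atTop_zero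
    obtain ⟨N, hN⟩ := eventually_atTop.mp
      (hten.eventually (eventually_lt_nhds (by norm_num : (0:ℝ) < 1)))
    have heq : ∀ n, N ≤ n → γ n ω = min (γ n ω) 1 := by
      intro n hn
      rcases min_cases (γ n ω) 1 with ⟨h1, _⟩ | ⟨h1, _⟩
      · rw [h1]
      · have := hN n hn; rw [h1] at this; exact absurd this (lt_irrefl _)
    have hs2 : Summable fun n => γ (n + N) ω := by
      have h := (summable_nat_add_iff N).mpr hsum
      exact h.congr fun n => (heq (n + N) (Nat.le_add_left _ _)).symm
    have hs3 : Summable fun n => γ n ω := (summable_nat_add_iff N).mp hs2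
    exact (not_summable_iff_tendsto_nat_atTop_of_nonneg fun n => hγ0 n ω).mpr hγω hs3
  -- pathwise recursion
  have hrec' : ∀ n, |X (n+1) ω - xstar|
      ≤ max (max (α n ω) ((1 + β n ω - min (γ n ω) 1) * |X n ω - xstar|) + s n ω * W n ω)
          |W n ω| := by
    intro n
    have h1 : |X (n+1) ω - xstar| = |(T n ω - xstar) + W n ω| := by
      rw [hrec n ω]; congr 1; ring
    have h2 := abs_add_le_max_dvor (T n ω - xstar) (W n ω)
    calc |X (n+1) ω - xstar| = |(T n ω - xstar) + W n ω| := h1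
      _ ≤ max (|T n ω - xstar| + s n ω * W n ω) |W n ω| := h2
      _ ≤ max (max (α n ω) ((1 + β n ω - min (γ n ω) 1) * |X n ω - xstar|) + s n ω * W n ω)
            |W n ω| := by
          refine max_le_max (add_le_add ?_ le_rfl) le_rfl
          refine le_trans (hbω n) (max_le_max le_rfl ?_)
          exact mul_le_mul_of_nonneg_right
            (by linarith [min_le_left (γ n ω) 1]) (abs_nonneg _)
  have hdet := dvoretzky_det (fun n => |X n ω - xstar|) (fun n => α n ω) (fun n => β n ω)
    (fun n => min (γ n ω) 1) (fun n => s n ω * W n ω) (fun n => |W n ω|)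
    (fun n => abs_nonneg _) (fun n => hα0 n ω) hαω (fun n => hβ0 n ω) hβω
    (fun n => le_min (hγ0 n ω) zero_le_one) (fun n => min_le_right _ _) hγ't hwC
    (fun n => abs_nonneg _) hδω hrec'
  rw [tendsto_iff_dist_tendsto_zero]
  simpa [Real.dist_eq] using hdet
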